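/- If (c⁽¹⁾, κ⁽¹⁾, a) satisfies the twisted cocycle conditions d_a²κ⁽¹⁾ = 0 and d_a³c⁽¹⁾(g,h,k,f) = (−1)^{κ⁽¹⁾(g,h)·(κ⁽¹⁾)^{a(gh)}(k,f)}, and (c⁽²⁾, κ⁽²⁾) is obtained from (c⁽¹⁾, κ⁽¹⁾) via m ∈ C¹(G,ℤ₂⊕ℤ₂) and σ ∈ C²(G,U(1)⊕U(1)) by κ⁽²⁾ = d_a¹m + κ⁽¹⁾ and c⁽²⁾(g,h,k) = (−1)^{κ⁽¹⁾(g,h)·m^{a(gh)}(k)}·(−1)^{m(g)·(κ⁽²⁾)^{a(g)}(h,k)}·(d_a²σ)(g,h,k)·c⁽¹⁾(g,h,k), then (c⁽²⁾, κ⁽²⁾, a) also satisfies d_a²κ⁽²⁾ = 0 and d_a³c⁽²⁾(g,h,k,f) = (−1)^{κ⁽²⁾(g,h)·(κ⁽²⁾)^{a(gh)}(k,f)}. -/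

import Mathlib

/-- The swap action of `ZMod 2` on `A ⊕ A`. -/
def swapP {A : Type*} (t : ZMod 2) (x : A × A) : A × A :=
  if t = 0 then x else (x.2, x.1)

/-- `-1` as an element of the circle group `U(1)`. -/
noncomputable def neg1 : Circle :=
  ⟨-1, by rw [Submonoid.unitSphere]; simp [mem_sphere_zero_iff_norm]⟩

/-- `(-1)^t ∈ U(1)` for `t ∈ ℤ₂`. -/
noncomputable def sgn (t : ZMod 2) : Circle := neg1 ^ t.val

/-- Componentwise `(-1)^x ∈ U(1) ⊕ U(1)` for `x ∈ ℤ₂ ⊕ ℤ₂`. -/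
noncomputable def sgn2 (x : ZMod 2 × ZMod 2) : Circle × Circle := (sgn x.1, sgn x.2)

/-- Twisted degree-1 differential on `ℤ₂ ⊕ ℤ₂`-valued 1-cochains. -/
def ad1 {G : Type*} [Group G] (a : G → ZMod 2) (m : G → ZMod 2 × ZMod 2) :
    G → G → ZMod 2 × ZMod 2 :=
  fun g h => swapP (a g) (m h) + m g - m (g * h)

/-- Twisted degree-2 differential on `ℤ₂ ⊕ ℤ₂`-valued 2-cochains. -/
def ad2 {G : Type*} [Group G] (a : G → ZMod 2) (y : G → G → ZMod 2 × ZMod 2) :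
    G → G → G → ZMod 2 × ZMod 2 :=
  fun g h k => swapP (a g) (y h k) + y g (h * k) - y (g * h) k - y g h

/-- Twisted degree-2 differential on `U(1) ⊕ U(1)`-valued 2-cochains. -/
def d2 {G A : Type*} [Group G] [CommGroup A] (a : G → ZMod 2)
    (y : G → G → A × A) : G → G → G → A × A :=
  fun g h k => swapP (a g) (y h k) * y g (h * k) * (y (g * h) k)⁻¹ * (y g h)⁻¹

/-- Twisted degree-3 differential on `U(1) ⊕ U(1)`-valued 3-cochains. -/
def d3 {G A : Type*} [Group G] [CommGroup A] (a : G → ZMod 2)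
    (z : G → G → G → A × A) : G → G → G → G → A × A :=
  fun g h k f =>
    swapP (a g) (z h k f) * z g (h * k) f * z g h k * (z (g * h) k f)⁻¹ * (z g h (k * f))⁻¹

/-- The cocycle-type conditions defining `\widetilde{PD}_0(G)`:
`d_a² κ = 0` and `d_a³ c(g,h,k,f) = (-1)^{κ(g,h)·κ^{a(gh)}(k,f)}`. -/
def PDCond {G : Type*} [Group G] (a : G → ZMod 2)
    (c : G → G → G → Circle × Circle) (κ : G → G → ZMod 2 × ZMod 2) : Prop :=
  (∀ g h k : G, ad2 a κ g h k = 0) ∧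
  (∀ g h k f : G, d3 a c g h k f = sgn2 (κ g h * swapP (a (g * h)) (κ k f)))

/-- A triple `(c, κ, a)` as in the definition of `\widetilde{PD}_0(G)`. -/
def Triple (G : Type*) [Group G] :=
  (G → G → G → Circle × Circle) × (G → G → ZMod 2 × ZMod 2) × (G → ZMod 2)

/-- The relation `∼_{PD_0(G)}` on triples `(c, κ, a)`. -/
def PDRel {G : Type*} [Group G] (p q : Triple G) : Prop :=
  p.2.2 = q.2.2 ∧
  ∃ (m : G → ZMod 2 × ZMod 2) (σ : G → G → Circle × Circle),
    (∀ g h : G, q.2.1 g h = ad1 p.2.2 m g h + p.2.1 g h) ∧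
    (∀ g h k : G,
      q.1 g h k =
        sgn2 (p.2.1 g h * swapP (p.2.2 (g * h)) (m k)) *
          sgn2 (m g * swapP (p.2.2 g) (q.2.1 h k)) *
          d2 p.2.2 σ g h k * p.1 g h k)

lemma zmod2_cases (s : ZMod 2) : s = 0 ∨ s = 1 := by revert s; decide

section helpers
variable {A : Type*}

lemma swapP_zero [Zero A] (t : ZMod 2) : swapP t (0 : A × A) = 0 := by
  unfold swapP; split <;> rfl

lemma swapP_add [Add A] (t : ZMod 2) (x y : A × A) :
    swapP t (x + y) = swapP t x + swapP t y := by
  unfold swapP; split <;> rfl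

lemma swapP_sub [Sub A] (t : ZMod 2) (x y : A × A) :
    swapP t (x - y) = swapP t x - swapP t y := by
  unfold swapP; split <;> rfl

lemma swapP_mul [Mul A] (t : ZMod 2) (x y : A × A) :
    swapP t (x * y) = swapP t x * swapP t y := by
  unfold swapP; split <;> rfl

lemma swapP_inv [Inv A] (t : ZMod 2) (x : A × A) :
    swapP t (x⁻¹) = (swapP t x)⁻¹ := by
  unfold swapP; split <;> rfl

lemma swapP_swapP (s t : ZMod 2) (x : A × A) :
    swapP s (swapP t x) = swapP (s + t) x := by
  rcases zmod2_cases s with hs | hs <;> rcases zmod2_cases t with ht | ht <;>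
    subst hs <;> subst ht <;>
    simp [swapP, (by decide : (1 + 1 : ZMod 2) = 0), (by decide : (1 : ZMod 2) ≠ 0)]

end helpers

lemma neg1_mul_neg1 : neg1 * neg1 = 1 := by
  ext
  rw [Circle.coe_mul]
  simp [neg1]

lemma sgn_add (s t : ZMod 2) : sgn (s + t) = sgn s * sgn t := by
  rcases zmod2_cases s with hs | hs <;> rcases zmod2_cases t with ht | ht <;>
    subst hs <;> subst ht <;>
    simp [sgn, (by decide : (1 + 1 : ZMod 2) = 0), ZMod.val_zero, ZMod.val_one, neg1_mul_neg1]

lemma sgn_sq (t : ZMod 2) : sgn t * sgn t = 1 := by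
  have ht : t + t = 0 := by rcases zmod2_cases t with h | h <;> subst h <;> decide
  rw [← sgn_add, ht]
  simp [sgn, ZMod.val_zero]

lemma sgn_inv (t : ZMod 2) : (sgn t)⁻¹ = sgn t := inv_eq_of_mul_eq_one_right (sgn_sq t)

lemma sgn2_add (x y : ZMod 2 × ZMod 2) : sgn2 (x + y) = sgn2 x * sgn2 y := by
  simp [sgn2, sgn_add]

lemma sgn2_inv (x : ZMod 2 × ZMod 2) : (sgn2 x)⁻¹ = sgn2 x := by
  simp [sgn2, Prod.ext_iff, sgn_inv]

lemma sgn2_swapP (t : ZMod 2) (x : ZMod 2 × ZMod 2) :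
    sgn2 (swapP t x) = swapP t (sgn2 x) := by
  rcases zmod2_cases t with ht | ht <;> subst ht <;>
    simp [swapP, sgn2, (by decide : (1 : ZMod 2) ≠ 0)]


/-- if `(c¹, κ¹, a)` satisfies the twisted cocycle conditions and
`(c², κ²)` is obtained from it via `m ∈ C¹(G,ℤ₂⊕ℤ₂)` and `σ ∈ C²(G,U(1)⊕U(1))`,
then `(c², κ², a)` also satisfies the twisted cocycle conditions. -/
theorem stmt3 {G : Type*} [Group G] [Fintype G]
    (a : G → ZMod 2) (ha : ∀ g h, a (g * h) = a g + a h)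
    (c₁ c₂ : G → G → G → Circle × Circle) (κ₁ κ₂ : G → G → ZMod 2 × ZMod 2)
    (hcond : PDCond a c₁ κ₁)
    (m : G → ZMod 2 × ZMod 2) (σ : G → G → Circle × Circle)
    (hκ : ∀ g h, κ₂ g h = ad1 a m g h + κ₁ g h)
    (hc : ∀ g h k,
      c₂ g h k =
        sgn2 (κ₁ g h * swapP (a (g * h)) (m k)) *
          sgn2 (m g * swapP (a g) (κ₂ h k)) * d2 a σ g h k * c₁ g h k) :
    PDCond a c₂ κ₂ := by

  have htwo : (2 : ZMod 2 × ZMod 2) = 0 := by decide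
  constructor
  · intro g h k
    have h1 := hcond.1 g h k
    simp only [ad2, ad1] at h1 ⊢
    simp only [hκ, ad1, swapP_add, swapP_sub, swapP_swapP, ha, mul_assoc] at h1 ⊢
    linear_combination h1
  · intro g h k f
    set Δ : G → G → G → ZMod 2 × ZMod 2 := fun x y z =>
      κ₁ x y * swapP (a (x * y)) (m z) + m x * swapP (a x) (κ₂ y z) with hΔ
    have hc' : ∀ x y z, c₂ x y z = sgn2 (Δ x y z) * (d2 a σ x y z * c₁ x y z) := by
      intro x y z
      rw [hc, hΔ, sgn2_add, mul_assoc]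
    have hB : d3 a (d2 a σ) g h k f = 1 := by
      simp only [d3, d2, swapP_mul, swapP_inv, mul_inv_rev, swapP_swapP, ha, mul_assoc]
      apply Additive.ofMul.injective
      simp only [ofMul_mul, ofMul_inv, ofMul_one]
      abel
    have key : d3 a c₂ g h k f
        = sgn2 (swapP (a g) (Δ h k f) + Δ g (h * k) f + Δ g h k + Δ (g * h) k f
              + Δ g h (k * f))
          * (d3 a (d2 a σ) g h k f * d3 a c₁ g h k f) := by
      simp only [d3, hc', swapP_mul, mul_inv_rev, sgn2_add, sgn2_swapP, sgn2_inv]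
      apply Additive.ofMul.injective
      simp only [ofMul_mul, ofMul_inv]
      abel
    rw [key, hB, one_mul, hcond.2 g h k f, ← sgn2_add]
    apply congrArg
    have e1 := hcond.1 g h k
    have e2 := congrArg (swapP (a g)) (hcond.1 h k f)
    simp only [ad2, swapP_add, swapP_sub, swapP_swapP, swapP_zero, ha, mul_assoc, add_assoc] at e1 e2
    simp only [hΔ, hκ, ad1, swapP_add, swapP_sub, swapP_mul, swapP_swapP, ha, mul_assoc, add_assoc]
    linear_combination (swapP (a g + (a h + a k)) (m f)) * e1 + m g * e2 +
      (κ₁ g h * swapP (a g + a h) (m (k * f))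
        + κ₁ (g * h) k * swapP (a g + (a h + a k)) (m f)
        + m g * swapP (a g) (κ₁ h k)
        + m g * swapP (a g) (κ₁ (h * k) f)
        + m g * swapP (a g) (m h)
        - m g * swapP (a g) (m (h * (k * f)))
        - m g * swapP (a g + a h) (κ₁ k f)
        + m g * swapP (a g + a h) (m (k * f))
        + m (g * h) * swapP (a g + a h) (κ₁ k f)
        + m (g * h) * swapP (a g + a h) (m k)
        - m (g * h) * swapP (a g + a h) (m (k * f))
        + m (g * h) * swapP (a g + (a h + a k)) (m f)) * htwo
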